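/- Let G be a group acting on a set X, H ≤ G a subgroup, and V an H-representation over a field. For K ≤ G an open-compact-type subgroup and the induced module Ind(V) = {φ : G → V : φ(hg) = h·φ(g)}, the map φ ↦ (φ(ξ))_ξ, where ξ runs over a set of representatives of the double cosets H\G/K, induces an isomorphism Ind(V)^K ≅ ⊕_ξ V^{H(ξ)}, where H(ξ) = H ∩ ξKξ⁻¹ acts on V through H. -/
import Mathlib


/-- Mackey decomposition: let `G` be a group, `H, K ≤ G` subgroups,
`V` an `H`-representation over a field `E` via `ρ`, and `Ξ` a finite set of
representatives for the double cosets `H\G/K`.  Then the evaluation map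
`φ ↦ (φ(ξ))_{ξ ∈ Ξ}` is a bijection from the `K`-invariants of the induced module
`Ind(V) = {φ : G → V | φ(hg) = h·φ(g)}` onto `⊕_ξ V^{H(ξ)}`, where
`H(ξ) = H ∩ ξKξ⁻¹`. -/
theorem mackey_decomposition (G : Type*) [Group G] (H K : Subgroup G)
    (E V : Type*) [Field E] [AddCommGroup V] [Module E V]
    (ρ : Representation E H V)
    (Ξ : Finset G)
    (hrep : ∀ g : G, ∃ ξ ∈ Ξ, ∃ h ∈ H, ∃ k ∈ K, g = h * ξ * k)
    (hdistinct : ∀ ξ ∈ Ξ, ∀ ξ' ∈ Ξ, (∃ h ∈ H, ∃ k ∈ K, ξ' = h * ξ * k) → ξ = ξ') :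
    Set.BijOn (fun (φ : G → V) (ξ : Ξ) => φ ξ.1)
      {φ : G → V | (∀ (h : H) (g : G), φ ((h : G) * g) = ρ h (φ g)) ∧
        (∀ (k : K) (g : G), φ (g * (k : G)) = φ g)}
      {f : Ξ → V | ∀ (ξ : Ξ) (h : H) (k : K),
        (h : G) = ξ.1 * (k : G) * ξ.1⁻¹ → ρ h (f ξ) = f ξ} := by
  classical
  refine ⟨?_, ?_, ?_⟩
  · -- MapsTo
    rintro φ ⟨h1, h2⟩ ξ h k hrel
    have e1 : (h : G) * ξ.1 = ξ.1 * (k : G) := by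
      rw [hrel]; group
    calc ρ h (φ ξ.1) = φ ((h : G) * ξ.1) := (h1 h ξ.1).symm
      _ = φ (ξ.1 * (k : G)) := by rw [e1]
      _ = φ ξ.1 := h2 k ξ.1
  · -- InjOn
    intro φ hφ φ' hφ' heq
    funext g
    obtain ⟨ξ, hξ, h, hh, k, hk, hg⟩ := hrep g
    have e1 : φ ξ = φ' ξ := congrFun heq ⟨ξ, hξ⟩
    have c : ∀ ψ : G → V,
        ((∀ (h : H) (g : G), ψ ((h : G) * g) = ρ h (ψ g)) ∧
          (∀ (k : K) (g : G), ψ (g * (k : G)) = ψ g)) →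
        ψ g = ρ ⟨h, hh⟩ (ψ ξ) := by
      rintro ψ ⟨p1, p2⟩
      have : g = ((⟨h, hh⟩ : H) : G) * ξ * ((⟨k, hk⟩ : K) : G) := hg
      rw [this, p2 ⟨k, hk⟩, p1 ⟨h, hh⟩]
    rw [c φ hφ, c φ' hφ', e1]
  · -- SurjOn
    intro f hf
    choose ξg hξg hg hhg kg hkg hgeq using hrep
    set φ : G → V := fun g => ρ ⟨hg g, hhg g⟩ (f ⟨ξg g, hξg g⟩) with hφdef
    have key : ∀ (g ξ : G) (hξ : ξ ∈ Ξ) (h : G) (hh : h ∈ H) (k : G) (hk : k ∈ K),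
        g = h * ξ * k → φ g = ρ ⟨h, hh⟩ (f ⟨ξ, hξ⟩) := by
      intro g ξ hξ h hh k hk hge
      -- ξg g = ξ
      have hξeq : ξg g = ξ := by
        apply hdistinct (ξg g) (hξg g) ξ hξ
        refine ⟨h⁻¹ * hg g, mul_mem (inv_mem hh) (hhg g), kg g * k⁻¹,
          mul_mem (hkg g) (inv_mem hk), ?_⟩
        have e : h * ξ * k = hg g * ξg g * kg g := (hge.symm).trans (hgeq g)
        calc ξ = h⁻¹ * (h * ξ * k) * k⁻¹ := by group
          _ = h⁻¹ * (hg g * ξg g * kg g) * k⁻¹ := by rw [e]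
          _ = h⁻¹ * hg g * ξg g * (kg g * k⁻¹) := by group
      -- h⁻¹ * hg g = ξ * (k * (kg g)⁻¹) * ξ⁻¹
      have hcore : h⁻¹ * hg g = ξ * (k * (kg g)⁻¹) * ξ⁻¹ := by
        have e : hg g * ξ * kg g = h * ξ * k := by
          have e0 : hg g * ξg g * kg g = h * ξ * k := (hgeq g).symm.trans hge
          rwa [hξeq] at e0
        have : h⁻¹ * (hg g * ξ * kg g) * (kg g)⁻¹ = h⁻¹ * (h * ξ * k) * (kg g)⁻¹ := by
          rw [e]
        calc h⁻¹ * hg g = h⁻¹ * (hg g * ξ * kg g) * (kg g)⁻¹ * ξ⁻¹ * ξ * k⁻¹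
              * k * ξ⁻¹ := by group
          _ = h⁻¹ * (h * ξ * k) * (kg g)⁻¹ * ξ⁻¹ * ξ * k⁻¹ * k * ξ⁻¹ := by rw [this]
          _ = ξ * (k * (kg g)⁻¹) * ξ⁻¹ := by group
      have hfix : ρ ⟨h⁻¹ * hg g, mul_mem (inv_mem hh) (hhg g)⟩ (f ⟨ξ, hξ⟩)
          = f ⟨ξ, hξ⟩ :=
        hf ⟨ξ, hξ⟩ ⟨h⁻¹ * hg g, mul_mem (inv_mem hh) (hhg g)⟩
          ⟨k * (kg g)⁻¹, mul_mem hk (inv_mem (hkg g))⟩ hcore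
      have hmul : (⟨hg g, hhg g⟩ : H)
          = (⟨h, hh⟩ : H) * ⟨h⁻¹ * hg g, mul_mem (inv_mem hh) (hhg g)⟩ := by
        ext; simp
      have hfeq : f ⟨ξg g, hξg g⟩ = f ⟨ξ, hξ⟩ := by
        congr 1
        exact Subtype.ext hξeq
      rw [hφdef]
      simp only
      rw [hfeq, hmul, map_mul]
      simp [hfix]
    refine ⟨φ, ⟨?_, ?_⟩, ?_⟩
    · intro h g
      have e1 : φ g = ρ ⟨hg g, hhg g⟩ (f ⟨ξg g, hξg g⟩) := rfl
      have e2 : φ ((h : G) * g) = ρ (h * ⟨hg g, hhg g⟩) (f ⟨ξg g, hξg g⟩) := by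
        apply key ((h : G) * g) (ξg g) (hξg g) ((h : G) * hg g)
          (mul_mem h.2 (hhg g)) (kg g) (hkg g)
        conv_lhs => rw [hgeq g]
        group
      rw [e2, map_mul, e1]; rfl
    · intro k g
      have e2 : φ (g * (k : G)) = ρ ⟨hg g, hhg g⟩ (f ⟨ξg g, hξg g⟩) := by
        apply key (g * (k : G)) (ξg g) (hξg g) (hg g) (hhg g) (kg g * (k : G))
          (mul_mem (hkg g) k.2)
        conv_lhs => rw [hgeq g]
        group
      rw [e2]
    · funext ξ
      have := key ξ.1 ξ.1 ξ.2 1 (one_mem H) 1 (one_mem K) (by group)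
      simp only [this]
      have : (⟨1, one_mem H⟩ : H) = 1 := rfl
      rw [this, map_one]
      rfl
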